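/- arXiv:1607.05776 — 2 statements merged into one kernel-verified Lean document; each statement's English description precedes it below -/
import Mathlib

section
/- Lagrange Inversion: if R and Φ are formal power series over a field of characteristic 0 with R having zero constant term and Φ having nonzero constant term, and R(x) = x·Φ(R(x)), then for all n ≥ 1, the coefficient of x^n in R equals (1/n) times the coefficient of z^(n-1) in Φ(z)^n. -/
open PowerSeries Finset

/-- Composition `Φ(R)` of formal power series, valid when `R` has zero constant term. -/
noncomputable def psComp {K : Type*} [CommRing K] (Φ R : PowerSeries K) : PowerSeries K :=
  PowerSeries.mk fun m => ∑ k ∈ Finset.range (m + 1),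
    (PowerSeries.coeff k Φ) * PowerSeries.coeff m (R ^ k)

section Aux
variable {K : Type*} [Field K]

lemma coeff_psComp (Φ R : PowerSeries K) (m : ℕ) :
    coeff m (psComp Φ R) = ∑ k ∈ range (m + 1), coeff k Φ * coeff m (R ^ k) := by
  simp [psComp]

lemma coeff_pow_eq_zero {R : PowerSeries K} (hR : constantCoeff R = 0)
    {m k : ℕ} (h : m < k) : coeff m (R ^ k) = 0 := by
  have : (X : PowerSeries K) ^ k ∣ R ^ k :=
    pow_dvd_pow_of_dvd (PowerSeries.X_dvd_iff.mpr hR) k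
  exact (PowerSeries.X_pow_dvd_iff.mp this) m h

lemma aeval_dvd {R : PowerSeries K} (hR : constantCoeff R = 0)
    {N : ℕ} (P : Polynomial K) (h : ∀ k < N, P.coeff k = 0) :
    (X : PowerSeries K) ^ N ∣ Polynomial.aeval R P := by
  rw [Polynomial.aeval_eq_sum_range]
  apply Finset.dvd_sum
  intro i _
  by_cases hi : i < N
  · rw [h i hi, zero_smul]; exact dvd_zero _
  · push_neg at hi
    have h1 : (X : PowerSeries K) ^ N ∣ R ^ i :=
      dvd_trans (pow_dvd_pow X hi) (pow_dvd_pow_of_dvd (PowerSeries.X_dvd_iff.mpr hR) i)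
    rw [Algebra.smul_def]
    exact Dvd.dvd.mul_left h1 _

lemma psComp_sub_aeval_trunc_dvd {R : PowerSeries K} (hR : constantCoeff R = 0)
    (Ψ : PowerSeries K) (N : ℕ) :
    (X : PowerSeries K) ^ (N + 1) ∣ psComp Ψ R - Polynomial.aeval R (trunc (N + 1) Ψ) := by
  rw [PowerSeries.X_pow_dvd_iff]
  intro m hm
  rw [map_sub, coeff_psComp, sub_eq_zero]
  rw [Polynomial.aeval_eq_sum_range' (natDegree_trunc_lt Ψ N) R, map_sum]
  rw [Finset.sum_subset (Finset.range_subset_range.mpr hm)]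
  · apply Finset.sum_congr rfl
    intro k hk
    rw [Finset.mem_range] at hk
    rw [PowerSeries.coeff_trunc, if_pos hk, map_smul, smul_eq_mul]
  · intro k _ hk
    rw [Finset.mem_range, not_lt] at hk
    rw [coeff_pow_eq_zero hR hk, mul_zero]

lemma pow_psComp_dvd {R Φ : PowerSeries K} (hR : constantCoeff R = 0) (n : ℕ) (hn : 1 ≤ n) :
    (X : PowerSeries K) ^ n ∣ (psComp Φ R) ^ n - Polynomial.aeval R (trunc n (Φ ^ n)) := by
  obtain ⟨N, rfl⟩ := Nat.exists_eq_add_of_le hn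
  set M := 1 + N with hM
  have h1 : (X : PowerSeries K) ^ M ∣ psComp Φ R - Polynomial.aeval R (trunc M Φ) := by
    have := psComp_sub_aeval_trunc_dvd hR Φ N
    rwa [hM, add_comm 1 N]
  have h2 : (X : PowerSeries K) ^ M ∣
      (psComp Φ R) ^ M - (Polynomial.aeval R (trunc M Φ)) ^ M :=
    dvd_trans h1 (sub_dvd_pow_sub_pow _ _ M)
  have h3 : (Polynomial.aeval R (trunc M Φ)) ^ M =
      Polynomial.aeval R ((trunc M Φ) ^ M) := (map_pow _ _ _).symm
  -- coefficients below M of (trunc M Φ)^M agree with those of Φ^M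
  have hcoe : (X : PowerSeries K) ^ M ∣ Φ ^ M - ((trunc M Φ : Polynomial K) : PowerSeries K) ^ M := by
    apply dvd_trans _ (sub_dvd_pow_sub_pow _ _ M)
    rw [PowerSeries.X_pow_dvd_iff]
    intro m hm
    rw [map_sub, Polynomial.coeff_coe, PowerSeries.coeff_trunc, if_pos hm, sub_self]
  have h4 : (X : PowerSeries K) ^ M ∣
      Polynomial.aeval R ((trunc M Φ) ^ M - trunc M (Φ ^ M)) := by
    apply aeval_dvd hR
    intro k hk
    have := (PowerSeries.X_pow_dvd_iff.mp hcoe) k hk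
    rw [map_sub, sub_eq_zero] at this
    rw [Polynomial.coeff_sub, PowerSeries.coeff_trunc, if_pos hk, sub_eq_zero,
      ← Polynomial.coeff_coe, Polynomial.coe_pow]
    exact this.symm
  have := dvd_add h2 h4
  rw [show (Polynomial.aeval R) (trunc M Φ ^ M - trunc M (Φ ^ M)) = (Polynomial.aeval R) (trunc M Φ ^ M) - (Polynomial.aeval R) (trunc M (Φ ^ M)) from map_sub _ _ _] at this
  rw [h3] at this
  convert this using 1
  ring

variable [CharZero K]

lemma residue_lemma {U : PowerSeries K} (hU : constantCoeff U ≠ 0) {R : PowerSeries K}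
    (hR : R = X * U) (m : ℕ) (hm : 1 ≤ m) :
    coeff (m - 1) (d⁄dX K R * U⁻¹ ^ m) = if m = 1 then 1 else 0 := by
  have hUW : U * U⁻¹ = 1 := PowerSeries.mul_inv_cancel U hU
  have hdR : d⁄dX K R = X * d⁄dX K U + U := by
    rw [hR, Derivation.leibniz, derivative_X, smul_eq_mul, smul_eq_mul, mul_one]
  by_cases h1 : m = 1
  · subst h1
    rw [if_pos rfl]
    simp only [Nat.sub_self, pow_one, coeff_zero_eq_constantCoeff, map_mul, hdR, map_add,
      constantCoeff_X, zero_mul, zero_add, PowerSeries.constantCoeff_inv]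
    exact mul_inv_cancel₀ hU
  · rw [if_neg h1]
    set W := U⁻¹ with hW
    obtain ⟨p, rfl⟩ : ∃ p, m = p + 2 := ⟨m - 2, by omega⟩
    have hW' : d⁄dX K W = -(W ^ 2) * d⁄dX K U := by
      rw [hW]; exact derivative_inv' U
    have hUW3 : U * W ^ (p + 3) = W ^ (p + 2) := by
      rw [pow_succ', ← mul_assoc, hUW, one_mul]
    have hT' : d⁄dX K (U * W ^ (p + 2)) =
        -((p : PowerSeries K) + 1) * (d⁄dX K U * W ^ (p + 2)) := by
      rw [Derivation.leibniz, Derivation.leibniz_pow, hW']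
      simp only [smul_eq_mul, nsmul_eq_mul, Nat.cast_add, Nat.cast_ofNat]
      have h3 : U * (((p : PowerSeries K) + 2) * (W ^ (p + 1) * (-(W ^ 2) * d⁄dX K U))) =
          -((p : PowerSeries K) + 2) * (W ^ (p + 2) * d⁄dX K U) := by
        have : U * (W ^ (p + 1) * (W ^ 2 * d⁄dX K U)) = W ^ (p + 2) * d⁄dX K U := by
          rw [show W ^ (p+1) * (W ^ 2 * d⁄dX K U) = W ^ (p+3) * d⁄dX K U by ring,
            ← mul_assoc, hUW3]
        calc U * (((p : PowerSeries K) + 2) * (W ^ (p + 1) * (-(W ^ 2) * d⁄dX K U)))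
            = -(((p : PowerSeries K) + 2) * (U * (W ^ (p + 1) * (W ^ 2 * d⁄dX K U)))) := by ring
          _ = -((p : PowerSeries K) + 2) * (W ^ (p + 2) * d⁄dX K U) := by rw [this]; ring
      rw [show p + 2 - 1 = p + 1 from rfl, h3]; ring
    -- now compute the coefficient
    have hsplit : d⁄dX K R * W ^ (p + 2) =
        X * (d⁄dX K U * W ^ (p + 2)) + U * W ^ (p + 2) := by
      rw [hdR]; ring
    have hcast : ((p : PowerSeries K) + 1) = C ((p : K) + 1) := by
      simp [map_add, map_natCast]
    set s := coeff p (d⁄dX K U * W ^ (p + 2)) with hs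
    set t := coeff (p + 1) (U * W ^ (p + 2)) with ht
    have h4 : coeff p (d⁄dX K (U * W ^ (p + 2))) = t * ((p : K) + 1 + 1 - 1) := by
      rw [coeff_derivative, ← ht]; ring
    have h5 : coeff p (d⁄dX K (U * W ^ (p + 2))) = -((p : K) + 1) * s := by
      rw [hT']
      rw [show -((p : PowerSeries K) + 1) = C (-((p : K) + 1)) by rw [map_neg, ← hcast]]
      rw [coeff_C_mul]
    have hne : ((p : K) + 1) ≠ 0 := Nat.cast_add_one_ne_zero p
    have hst : s + t = 0 := by
      have : t * ((p:K) + 1 + 1 - 1) = -((p:K)+1) * s := by rw [← h4, h5]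
      have h6 : t * ((p:K) + 1) = -((p:K)+1) * s := by rw [← this]; ring
      have : ((p:K)+1) * (s + t) = 0 := by linear_combination h6
      rcases mul_eq_zero.mp this with h | h
      · exact absurd h hne
      · exact h
    show coeff (p + 2 - 1) _ = 0
    rw [show p + 2 - 1 = p + 1 from rfl, hsplit, map_add, coeff_succ_X_mul, ← hs, ← ht, hst]

end Aux

/-- Lagrange Inversion: over a field of characteristic 0, if `R(0) = 0`, `Φ(0) ≠ 0`
and `R = x·Φ(R(x))`, then for all `n ≥ 1`, `[x^n] R = (1/n)·[z^(n-1)] Φ^n`. -/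
theorem lagrange_inversion {K : Type*} [Field K] [CharZero K]
    (R Φ : PowerSeries K)
    (hR0 : PowerSeries.constantCoeff R = 0)
    (hΦ0 : PowerSeries.constantCoeff Φ ≠ 0)
    (hfe : R = PowerSeries.X * psComp Φ R)
    (n : ℕ) (hn : 1 ≤ n) :
    PowerSeries.coeff n R = (1 / (n : K)) * PowerSeries.coeff (n - 1) (Φ ^ n) := by
  obtain ⟨N, rfl⟩ : ∃ N, n = N + 1 := ⟨n - 1, by omega⟩
  set U := psComp Φ R with hUdef
  have hU0 : constantCoeff U ≠ 0 := by
    have h : constantCoeff U = constantCoeff Φ := by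
      rw [hUdef, ← coeff_zero_eq_constantCoeff_apply, coeff_psComp]
      simp
    rw [h]; exact hΦ0
  set W := U⁻¹ with hWdef
  have hUW : U * W = 1 := PowerSeries.mul_inv_cancel U hU0
  have hR : R = X * U := hfe
  set P := trunc (N + 1) (Φ ^ (N + 1)) with hP
  set V := Polynomial.aeval R P with hV
  have hdvd : (X : PowerSeries K) ^ (N + 1) ∣ U ^ (N + 1) - V := pow_psComp_dvd hR0 (N + 1) hn
  have hone : W ^ (N + 1) * U ^ (N + 1) = 1 := by
    rw [← mul_pow, mul_comm W U, hUW, one_pow]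
  have e1 : coeff N (d⁄dX K R) = coeff N (d⁄dX K R * W ^ (N + 1) * U ^ (N + 1)) := by
    rw [mul_assoc, hone, mul_one]
  have e2 : coeff N (d⁄dX K R * W ^ (N + 1) * (U ^ (N + 1) - V)) = 0 := by
    have hd : (X : PowerSeries K) ^ (N + 1) ∣ d⁄dX K R * W ^ (N + 1) * (U ^ (N + 1) - V) :=
      Dvd.dvd.mul_left hdvd _
    exact (PowerSeries.X_pow_dvd_iff.mp hd) N (by omega)
  have e3 : coeff N (d⁄dX K R) = coeff N (d⁄dX K R * W ^ (N + 1) * V) := by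
    rw [e1, show d⁄dX K R * W ^ (N + 1) * U ^ (N + 1) =
      d⁄dX K R * W ^ (N + 1) * V + d⁄dX K R * W ^ (N + 1) * (U ^ (N + 1) - V) by ring,
      map_add, e2, add_zero]
  have hVsum : V = ∑ j ∈ range (N + 1), P.coeff j • R ^ j := by
    rw [hV]; exact Polynomial.aeval_eq_sum_range' (natDegree_trunc_lt _ N) R
  have e4 : coeff N (d⁄dX K R * W ^ (N + 1) * V) =
      ∑ j ∈ range (N + 1), P.coeff j * coeff N (d⁄dX K R * W ^ (N + 1) * R ^ j) := by
    rw [hVsum, Finset.mul_sum, map_sum]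
    refine Finset.sum_congr rfl fun j _ => ?_
    rw [mul_smul_comm, map_smul, smul_eq_mul]
  have e5 : ∀ j ∈ range (N + 1),
      P.coeff j * coeff N (d⁄dX K R * W ^ (N + 1) * R ^ j) =
      P.coeff j * (if j = N then 1 else 0) := by
    intro j hj
    rw [Finset.mem_range] at hj
    have hjN : j ≤ N := by omega
    congr 1
    have hRj : R ^ j = X ^ j * U ^ j := by rw [hR, mul_pow]
    have hWsplit : W ^ (N + 1) = W ^ (N + 1 - j) * W ^ j := by
      rw [← pow_add]; congr 1; omega
    have hWUj : W ^ j * U ^ j = 1 := by rw [← mul_pow, mul_comm W U, hUW, one_pow]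
    have hprod : d⁄dX K R * W ^ (N + 1) * R ^ j =
        X ^ j * (d⁄dX K R * W ^ (N + 1 - j)) := by
      rw [hRj, hWsplit]
      calc d⁄dX K R * (W ^ (N + 1 - j) * W ^ j) * (X ^ j * U ^ j)
          = X ^ j * (d⁄dX K R * W ^ (N + 1 - j)) * (W ^ j * U ^ j) := by ring
        _ = X ^ j * (d⁄dX K R * W ^ (N + 1 - j)) := by rw [hWUj, mul_one]
    rw [hprod, coeff_X_pow_mul', if_pos hjN]
    have hres := residue_lemma hU0 hR (N + 1 - j) (by omega)
    rw [show N + 1 - j - 1 = N - j by omega] at hres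
    rw [hres]
    by_cases hjn : j = N
    · rw [if_pos (by omega), if_pos hjn]
    · rw [if_neg (by omega), if_neg hjn]
  have e6 : coeff N (d⁄dX K R) = P.coeff N := by
    rw [e3, e4, Finset.sum_congr rfl e5]
    simp [Finset.sum_ite_eq']
  have hPN : P.coeff N = coeff N (Φ ^ (N + 1)) := by
    rw [hP, PowerSeries.coeff_trunc, if_pos (by omega)]
  have hder : coeff N (d⁄dX K R) = coeff (N + 1) R * ((N : K) + 1) := by
    rw [coeff_derivative]
  have hmain : coeff (N + 1) R * ((N : K) + 1) = coeff N (Φ ^ (N + 1)) := by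
    rw [← hder, e6, hPN]
  have hne : ((N : K) + 1) ≠ 0 := Nat.cast_add_one_ne_zero N
  have hc : ((N + 1 : ℕ) : K) = (N : K) + 1 := by push_cast; ring
  rw [show N + 1 - 1 = N from rfl, hc, one_div, inv_mul_eq_div, eq_div_iff hne, hmain]
end

section
/- Let R(x) ∈ ℚ[[x]] satisfy R(0)=0 and R(x) = x exp(R(x)). Then for n ≥ 2, the coefficient of x^n in R(x)^2/(1−R(x))^2 equals (1/n!) · n! Σ_{k=0}^{n−2} n^k/k! = Σ_{k=0}^{n−2} n^k/k!; i.e., n! · [x^n] R(x)^2/(1−R(x))^2 = n! Σ_{k=0}^{n−2} n^k/k!. -/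
section TreeAux
open PowerSeries Finset

noncomputable def Ser (R : PowerSeries ℚ) (α : ℕ → ℚ) : PowerSeries ℚ :=
  PowerSeries.mk fun m => ∑ i ∈ Finset.range (m+1), α i * PowerSeries.coeff m (R ^ i)


lemma coeff_Ser (R : PowerSeries ℚ) (α : ℕ → ℚ) (m : ℕ) :
    PowerSeries.coeff m (Ser R α) = ∑ i ∈ Finset.range (m+1), α i * PowerSeries.coeff m (R ^ i) := by
  simp [Ser]


lemma Ser_congr {R : PowerSeries ℚ} {α β : ℕ → ℚ} (h : ∀ j, α j = β j) :
    Ser R α = Ser R β := by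
  have : α = β := funext h
  rw [this]


lemma coeff_pow_eq_zero_s17 {R : PowerSeries ℚ} (h0 : PowerSeries.constantCoeff R = 0) :
    ∀ i m, m < i → PowerSeries.coeff m (R ^ i) = 0 := by
  intro i
  induction i with
  | zero => intro m hm; exact absurd hm (Nat.not_lt_zero m)
  | succ i ih =>
    intro m hm
    rw [pow_succ, mul_comm, PowerSeries.coeff_mul]
    apply Finset.sum_eq_zero
    rintro ⟨a, b⟩ hab
    rw [Finset.HasAntidiagonal.mem_antidiagonal] at hab
    rcases Nat.eq_zero_or_pos a with h | h
    · subst h; simp [h0]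
    · have : b < i := by omega
      simp [ih b this]


lemma Ser_mul_Ser {R : PowerSeries ℚ} (h0 : PowerSeries.constantCoeff R = 0) (α β : ℕ → ℚ) :
    Ser R α * Ser R β = Ser R (fun c => ∑ p ∈ Finset.HasAntidiagonal.antidiagonal c, α p.1 * β p.2) := by
  ext m
  have hext : ∀ (a : ℕ) (γ : ℕ → ℚ), a ≤ m →
      PowerSeries.coeff a (Ser R γ) = ∑ i ∈ Finset.range (m+1), γ i * PowerSeries.coeff a (R ^ i) := by
    intro a γ ha
    rw [coeff_Ser]
    apply Finset.sum_subset
    · exact Finset.range_subset_range.mpr (by omega)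
    · intro i hi hni
      simp only [Finset.mem_range] at hi hni
      rw [coeff_pow_eq_zero_s17 h0 i a (by omega), mul_zero]
  set F : ℕ × ℕ → ℚ := fun p => α p.1 * β p.2 * PowerSeries.coeff m (R ^ (p.1 + p.2)) with hF
  have step1 : PowerSeries.coeff m (Ser R α * Ser R β)
      = ∑ p ∈ Finset.range (m+1) ×ˢ Finset.range (m+1), F p := by
    rw [PowerSeries.coeff_mul]
    have h1 : ∀ p ∈ Finset.HasAntidiagonal.antidiagonal m,
        PowerSeries.coeff p.1 (Ser R α) * PowerSeries.coeff p.2 (Ser R β)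
        = ∑ q ∈ Finset.range (m+1) ×ˢ Finset.range (m+1),
            α q.1 * β q.2 * (PowerSeries.coeff p.1 (R ^ q.1) * PowerSeries.coeff p.2 (R ^ q.2)) := by
      intro p hp
      rw [Finset.HasAntidiagonal.mem_antidiagonal] at hp
      rw [hext p.1 α (by omega), hext p.2 β (by omega), Finset.sum_mul_sum,
        ← Finset.sum_product']
      apply Finset.sum_congr rfl
      intro q _; ring
    rw [Finset.sum_congr rfl h1, Finset.sum_comm]
    apply Finset.sum_congr rfl
    intro q _
    rw [← Finset.mul_sum, hF]
    simp only
    rw [pow_add, PowerSeries.coeff_mul]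
  have step2 : PowerSeries.coeff m (Ser R (fun c => ∑ p ∈ Finset.HasAntidiagonal.antidiagonal c, α p.1 * β p.2))
      = ∑ c ∈ Finset.range (m+1), ∑ p ∈ Finset.HasAntidiagonal.antidiagonal c, F p := by
    rw [coeff_Ser]
    apply Finset.sum_congr rfl
    intro c _
    rw [Finset.sum_mul]
    apply Finset.sum_congr rfl
    intro p hp
    rw [Finset.HasAntidiagonal.mem_antidiagonal] at hp
    rw [hF]; simp only; rw [hp]
  rw [step1, step2]
  have hdisj : (↑(Finset.range (m+1)) : Set ℕ).PairwiseDisjoint (Finset.HasAntidiagonal.antidiagonal : ℕ → Finset (ℕ × ℕ)) := by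
    intro a _ b _ hab
    simp only [Function.onFun, Finset.disjoint_left]
    intro p hpa hpb
    rw [Finset.HasAntidiagonal.mem_antidiagonal] at hpa hpb
    exact hab (hpa ▸ hpb ▸ rfl)
  rw [← Finset.sum_biUnion hdisj]
  symm
  apply Finset.sum_subset
  · intro p hp
    rw [Finset.mem_biUnion] at hp
    obtain ⟨c, hc, hpc⟩ := hp
    rw [Finset.HasAntidiagonal.mem_antidiagonal] at hpc
    rw [Finset.mem_range] at hc
    simp only [Finset.mem_product, Finset.mem_range]
    omega
  · intro p hp hnp
    have : m < p.1 + p.2 := by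
      by_contra h
      push_neg at h
      exact hnp (Finset.mem_biUnion.mpr ⟨p.1 + p.2, Finset.mem_range.mpr (by omega),
        Finset.HasAntidiagonal.mem_antidiagonal.mpr rfl⟩)
    rw [hF]; simp only
    rw [coeff_pow_eq_zero_s17 h0 _ _ this, mul_zero]


lemma Ser_delta {R : PowerSeries ℚ} (h0 : PowerSeries.constantCoeff R = 0) (k : ℕ) :
    Ser R (fun i => if i = k then 1 else 0) = R ^ k := by
  ext m
  rw [coeff_Ser]
  simp only [ite_mul, one_mul, zero_mul]
  rw [Finset.sum_ite_eq' (Finset.range (m+1)) k]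
  by_cases h : k ≤ m
  · simp [Finset.mem_range, Nat.lt_succ_of_le h]
  · rw [if_neg (by simp [Finset.mem_range]; omega), coeff_pow_eq_zero_s17 h0 k m (by omega)]


lemma psComp_exp_eq (R : PowerSeries ℚ) :
    psComp (PowerSeries.exp ℚ) R = Ser R (fun j => 1 / (j.factorial : ℚ)) := by
  ext m
  simp [psComp, Ser, PowerSeries.coeff_exp, Algebra.algebraMap_self]


lemma E_pow {R : PowerSeries ℚ} (h0 : PowerSeries.constantCoeff R = 0) :
    ∀ k : ℕ, (psComp (PowerSeries.exp ℚ) R) ^ k = Ser R (fun j => (k:ℚ)^j / (j.factorial : ℚ)) := by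
  intro k
  induction k with
  | zero =>
    have h1 := Ser_delta h0 0
    rw [pow_zero] at h1
    rw [pow_zero, ← h1]
    apply Ser_congr
    intro j
    rcases Nat.eq_zero_or_pos j with h | h
    · subst h; simp
    · rw [if_neg (by omega), Nat.cast_zero, zero_pow (by omega : j ≠ 0), zero_div]
  | succ k ih =>
    rw [pow_succ, ih, psComp_exp_eq, Ser_mul_Ser h0]
    apply Ser_congr
    intro c
    rw [Finset.Nat.sum_antidiagonal_eq_sum_range_succ_mk]
    have hc : (c.factorial : ℚ) ≠ 0 := Nat.cast_ne_zero.mpr c.factorial_ne_zero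
    rw [eq_div_iff hc, Finset.sum_mul]
    have : ∀ i ∈ Finset.range (c+1),
        (k:ℚ)^i / (i.factorial : ℚ) * (1 / ((c-i).factorial : ℚ)) * (c.factorial : ℚ)
        = (k:ℚ)^i * (1:ℚ)^(c-i) * (c.choose i : ℚ) := by
      intro i hi
      rw [Finset.mem_range] at hi
      rw [Nat.cast_choose ℚ (by omega : i ≤ c)]
      have h1 : (i.factorial : ℚ) ≠ 0 := Nat.cast_ne_zero.mpr i.factorial_ne_zero
      have h2 : ((c-i).factorial : ℚ) ≠ 0 := Nat.cast_ne_zero.mpr (c-i).factorial_ne_zero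
      field_simp
      ring
    rw [Finset.sum_congr rfl this, ← add_pow]
    push_cast
    try rfl


lemma main_formula {R : PowerSeries ℚ} (h0 : PowerSeries.constantCoeff R = 0)
    (hR : R = PowerSeries.X * psComp (PowerSeries.exp ℚ) R) :
    ∀ n k : ℕ, 1 ≤ k → k ≤ n →
      (n:ℚ) * (((n-k).factorial : ℕ) : ℚ) * PowerSeries.coeff n (R ^ k)
        = (k:ℚ) * (n:ℚ)^(n-k) := by
  intro n
  induction n using Nat.strong_induction_on with
  | _ n ih =>
    intro k hk1 hkn
    set m := n - k with hm
    have hmk : n = m + k := by omega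
    have hcoeff : PowerSeries.coeff n (R ^ k)
        = PowerSeries.coeff m ((psComp (PowerSeries.exp ℚ) R) ^ k) := by
      conv_lhs => rw [hR, mul_pow, hmk]
      rw [PowerSeries.coeff_X_pow_mul]
    rw [hcoeff, E_pow h0 k, coeff_Ser]
    rcases Nat.eq_zero_or_pos m with h | hm1
    · -- m = 0, so k = n
      rw [h]
      simp only [Finset.range_one, Finset.sum_singleton, pow_zero, Nat.factorial_zero]
      have : k = n := by omega
      subst this
      simp
    · -- 1 ≤ m
      rw [Finset.sum_range_succ']
      have hz0 : PowerSeries.coeff m (R ^ 0) = 0 := by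
        rw [pow_zero, PowerSeries.coeff_one, if_neg (by omega)]
      rw [hz0, mul_zero, add_zero]
      have hterm : ∀ j ∈ Finset.range m,
          (k:ℚ)^(j+1) / (((j+1).factorial : ℕ) : ℚ) * PowerSeries.coeff m (R ^ (j+1))
          = (k:ℚ) / ((m.factorial : ℕ) : ℚ) * (((m-1).choose j : ℕ) : ℚ) * (k:ℚ)^j * (m:ℚ)^(m-1-j) := by
        intro j hj
        rw [Finset.mem_range] at hj
        have hIH := ih m (by omega) (j+1) (by omega) (by omega)
        have hc : PowerSeries.coeff m (R ^ (j+1))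
            = ((j:ℚ)+1) * (m:ℚ)^(m-1-j) / ((m:ℚ) * (((m-1-j).factorial : ℕ) : ℚ)) := by
          have hmj : m - (j+1) = m-1-j := by omega
          have hm0 : (m:ℚ) ≠ 0 := Nat.cast_ne_zero.mpr (by omega)
          have hf : (((m-1-j).factorial : ℕ) : ℚ) ≠ 0 := Nat.cast_ne_zero.mpr (Nat.factorial_ne_zero _)
          rw [hmj] at hIH
          field_simp
          push_cast at hIH ⊢
          linear_combination hIH
        rw [hc]
        have h1 : (((j+1).factorial : ℕ) : ℚ) = ((j:ℚ)+1) * ((j.factorial : ℕ) : ℚ) := by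
          rw [Nat.factorial_succ]; push_cast; ring
        have h2 : ((m.factorial : ℕ) : ℚ) = (m:ℚ) * (((m-1).factorial : ℕ) : ℚ) := by
          conv_lhs => rw [show m = (m-1)+1 from by omega]
          rw [Nat.factorial_succ]
          push_cast [Nat.cast_sub (by omega : 1 ≤ m)]
          ring
        have h3 : (((m-1).choose j : ℕ) : ℚ)
            = (((m-1).factorial : ℕ) : ℚ) / (((j.factorial : ℕ) : ℚ) * (((m-1-j).factorial : ℕ) : ℚ)) :=
          Nat.cast_choose ℚ (by omega : j ≤ m-1)
        rw [h1, h2, h3]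
        have hm0 : (m:ℚ) ≠ 0 := Nat.cast_ne_zero.mpr (by omega)
        have hj0 : ((j.factorial : ℕ) : ℚ) ≠ 0 := Nat.cast_ne_zero.mpr (Nat.factorial_ne_zero _)
        have hj1 : ((j:ℚ)+1) ≠ 0 := by positivity
        have hmj0 : (((m-1-j).factorial : ℕ) : ℚ) ≠ 0 := Nat.cast_ne_zero.mpr (Nat.factorial_ne_zero _)
        have hm1f : (((m-1).factorial : ℕ) : ℚ) ≠ 0 := Nat.cast_ne_zero.mpr (Nat.factorial_ne_zero _)
        field_simp
        ring
      rw [Finset.sum_congr rfl hterm]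
      have hsum : ∑ j ∈ Finset.range m,
          (k:ℚ) / ((m.factorial : ℕ) : ℚ) * (((m-1).choose j : ℕ) : ℚ) * (k:ℚ)^j * (m:ℚ)^(m-1-j)
          = (k:ℚ) / ((m.factorial : ℕ) : ℚ) * ((k:ℚ) + (m:ℚ))^(m-1) := by
        have hm' : m - 1 + 1 = m := by omega
        rw [add_pow, hm', Finset.mul_sum]
        apply Finset.sum_congr rfl
        intro j hj
        ring
      rw [hsum]
      have hkm : (k:ℚ) + (m:ℚ) = (n:ℚ) := by
        rw [hmk]; push_cast; ring
      rw [hkm]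
      have hp : (n:ℚ)^m = (n:ℚ)^(m-1) * (n:ℚ) := by
        conv_lhs => rw [show m = m-1+1 from by omega]
        rw [pow_succ]
      rw [hp]
      have hmf : ((m.factorial : ℕ) : ℚ) ≠ 0 := Nat.cast_ne_zero.mpr (Nat.factorial_ne_zero _)
      field_simp


lemma Ser_sub (R : PowerSeries ℚ) (α β : ℕ → ℚ) :
    Ser R α - Ser R β = Ser R (fun i => α i - β i) := by
  ext m
  simp [Ser, Finset.sum_sub_distrib, sub_mul]


lemma one_sub_eq {R : PowerSeries ℚ} (h0 : PowerSeries.constantCoeff R = 0) :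
    1 - R = Ser R (fun i => (if i = 0 then (1:ℚ) else 0) - (if i = 1 then 1 else 0)) := by
  have e0 : (1 : PowerSeries ℚ) = Ser R (fun i => if i = 0 then 1 else 0) := by
    rw [Ser_delta h0 0, pow_zero]
  have e1 : R = Ser R (fun i => if i = 1 then 1 else 0) := by
    rw [Ser_delta h0 1, pow_one]
  rw [← Ser_sub]
  nth_rewrite 1 [e0]
  nth_rewrite 2 [e1]
  rfl


lemma one_sub_mul_U {R : PowerSeries ℚ} (h0 : PowerSeries.constantCoeff R = 0) :
    (1 - R) * Ser R (fun _ => 1) = 1 := by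
  rw [one_sub_eq h0, Ser_mul_Ser h0]
  have hc : ∀ c, (∑ p ∈ Finset.HasAntidiagonal.antidiagonal c,
      ((if p.1 = 0 then (1:ℚ) else 0) - (if p.1 = 1 then 1 else 0)) * (1:ℚ))
      = (if c = 0 then (1:ℚ) else 0) := by
    intro c
    rw [Finset.Nat.sum_antidiagonal_eq_sum_range_succ_mk]
    simp only [mul_one]
    rw [Finset.sum_sub_distrib, Finset.sum_ite_eq' (Finset.range (c+1)) 0 (fun _ => (1:ℚ)),
      Finset.sum_ite_eq' (Finset.range (c+1)) 1 (fun _ => (1:ℚ))]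
    rcases Nat.eq_zero_or_pos c with h | h
    · subst h; norm_num
    · rw [if_pos (Finset.mem_range.mpr (by omega)), if_pos (Finset.mem_range.mpr (by omega)),
        if_neg (by omega)]
      ring
  rw [Ser_congr hc, Ser_delta h0 0, pow_zero]


lemma inv_one_sub {R : PowerSeries ℚ} (h0 : PowerSeries.constantCoeff R = 0) :
    (1 - R)⁻¹ = Ser R (fun _ => 1) := by
  have hu : PowerSeries.constantCoeff (1 - R) ≠ 0 := by
    simp [h0]
  rw [PowerSeries.inv_eq_iff_mul_eq_one hu, mul_comm]
  exact one_sub_mul_U h0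


lemma R_mul_U {R : PowerSeries ℚ} (h0 : PowerSeries.constantCoeff R = 0) :
    R * Ser R (fun _ => 1) = Ser R (fun c => if c = 0 then 0 else 1) := by
  nth_rewrite 1 [show R = Ser R (fun i => if i = 1 then 1 else 0) from by rw [Ser_delta h0 1, pow_one]]
  rw [Ser_mul_Ser h0]
  apply Ser_congr
  intro c
  rw [Finset.Nat.sum_antidiagonal_eq_sum_range_succ_mk]
  simp only [mul_one]
  rw [Finset.sum_ite_eq' (Finset.range (c+1)) 1 (fun _ => (1:ℚ))]
  rcases Nat.eq_zero_or_pos c with h | h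
  · subst h; norm_num
  · rw [if_pos (Finset.mem_range.mpr (by omega)), if_neg (by omega)]


lemma w_eq (c : ℕ) :
    (∑ p ∈ Finset.HasAntidiagonal.antidiagonal c,
      (if p.1 = 0 then (0:ℚ) else 1) * (if p.2 = 0 then (0:ℚ) else 1)) = ((c - 1 : ℕ) : ℚ) := by
  rw [Finset.Nat.sum_antidiagonal_eq_sum_range_succ_mk]
  rcases Nat.eq_zero_or_pos c with h | h
  · subst h; norm_num
  · obtain ⟨c', rfl⟩ : ∃ c', c = c' + 1 := ⟨c - 1, by omega⟩
    rw [Finset.sum_range_succ', Finset.sum_range_succ]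
    have h1 : (if (0:ℕ) = 0 then (0:ℚ) else 1) * (if c' + 1 - 0 = 0 then (0:ℚ) else 1) = 0 := by
      norm_num
    have h2 : (if (c' + 1 : ℕ) = 0 then (0:ℚ) else 1) * (if c' + 1 - (c' + 1) = 0 then (0:ℚ) else 1) = 0 := by
      norm_num
    rw [h1, h2, add_zero, add_zero]
    have h3 : ∀ i ∈ Finset.range c',
        (if (i + 1 : ℕ) = 0 then (0:ℚ) else 1) * (if c' + 1 - (i + 1) = 0 then (0:ℚ) else 1) = 1 := by
      intro i hi
      rw [Finset.mem_range] at hi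
      rw [if_neg (by omega), if_neg (by omega), one_mul]
    rw [Finset.sum_congr rfl h3, Finset.sum_const, nsmul_eq_mul, mul_one]
    norm_num

end TreeAux

/-- For the tree function `R` (with `R(0)=0`, `R = x·exp(R)`) and `n ≥ 2`, the
coefficient of `x^n` in `R²/(1−R)²` equals `Σ_{k=0}^{n−2} n^k/k!`. -/
theorem coeff_R_sq_over_one_sub_R_sq (R : PowerSeries ℚ)
    (h0 : PowerSeries.constantCoeff R = 0)
    (hR : R = PowerSeries.X * psComp (PowerSeries.exp ℚ) R)
    (n : ℕ) (hn : 2 ≤ n) :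
    PowerSeries.coeff n (R ^ 2 * ((1 - R)⁻¹) ^ 2) =
      ∑ k ∈ Finset.range (n - 1), (n : ℚ) ^ k / (k.factorial : ℚ) := by
  rw [← mul_pow, inv_one_sub h0, R_mul_U h0, sq, Ser_mul_Ser h0, Ser_congr w_eq, coeff_Ser]
  rw [← Finset.sum_range_reflect]
  have hsimp : ∀ j : ℕ, n + 1 - 1 - j = n - j := by intro j; omega
  simp only [hsimp]
  rw [show n + 1 = (n-1) + 1 + 1 from by omega, Finset.sum_range_succ, Finset.sum_range_succ]
  rw [show n - (n - 1 + 1) - 1 = 0 from by omega, show n - (n - 1) - 1 = 0 from by omega]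
  rw [Nat.cast_zero, zero_mul, zero_mul, add_zero, add_zero]
  have hn0 : (n:ℚ) ≠ 0 := Nat.cast_ne_zero.mpr (by omega)
  set u : ℕ → ℚ := fun j => (j:ℚ) * ((n:ℚ) - (j:ℚ) - 1) * (n:ℚ)^j / ((n:ℚ) * ((j.factorial : ℕ):ℚ)) with hu
  have key : ∀ j ∈ Finset.range (n-1),
      ((n - j - 1 : ℕ):ℚ) * PowerSeries.coeff n (R ^ (n - j)) - (n:ℚ)^j / ((j.factorial : ℕ):ℚ)
      = u (j+1) - u j := by
    intro j hj
    rw [Finset.mem_range] at hj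
    have hM := main_formula h0 hR n (n - j) (by omega) (by omega)
    rw [show n - (n - j) = j from by omega] at hM
    have hfj : ((j.factorial : ℕ):ℚ) ≠ 0 := Nat.cast_ne_zero.mpr (Nat.factorial_ne_zero _)
    have hcoeff : PowerSeries.coeff n (R ^ (n - j))
        = ((n - j : ℕ):ℚ) * (n:ℚ)^j / ((n:ℚ) * ((j.factorial : ℕ):ℚ)) := by
      field_simp
      linear_combination hM
    rw [hcoeff, hu]
    simp only
    have c1 : ((n - j - 1 : ℕ):ℚ) = (n:ℚ) - (j:ℚ) - 1 := by
      rw [Nat.cast_sub (by omega : 1 ≤ n - j), Nat.cast_sub (by omega : j ≤ n)]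
      norm_num
    have c2 : ((n - j : ℕ):ℚ) = (n:ℚ) - (j:ℚ) := Nat.cast_sub (by omega : j ≤ n)
    rw [c1, c2]
    have hfj1 : (((j+1).factorial : ℕ):ℚ) = ((j:ℚ)+1) * ((j.factorial : ℕ):ℚ) := by
      rw [Nat.factorial_succ]; push_cast; ring
    rw [hfj1]
    push_cast
    have hj1 : (j:ℚ) + 1 ≠ 0 := by positivity
    field_simp
    ring
  have hzero : ∑ j ∈ Finset.range (n-1),
      (((n - j - 1 : ℕ):ℚ) * PowerSeries.coeff n (R ^ (n - j)) - (n:ℚ)^j / ((j.factorial : ℕ):ℚ)) = 0 := by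
    rw [Finset.sum_congr rfl key, Finset.sum_range_sub]
    rw [hu]
    simp only
    rw [Nat.cast_sub (by omega : 1 ≤ n)]
    push_cast
    ring
  rw [Finset.sum_sub_distrib] at hzero
  linarith
end
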